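/- Let Ẑ := ∏_p ℤ_p be the product of the rings of p-adic integers over all prime numbers p, and let ι : ℤ → Ẑ be the diagonal embedding x ↦ (x, x, x, …). Then the quotient abelian group Ẑ / ι(ℤ) is divisible: for every integer n > 0 and every class c ∈ Ẑ/ι(ℤ) there exists a class d ∈ Ẑ/ι(ℤ) with n • d = c. -/

import Mathlib

instance (p : Nat.Primes) : Fact (p : ℕ).Prime := ⟨p.2⟩

/-- The diagonal embedding of `ℤ` into `Ẑ = ∏_p ℤ_p`, `x ↦ (x, x, x, …)`. -/
noncomputable def zhatDiagonal : ℤ →+ (∀ p : Nat.Primes, ℤ_[(p : ℕ)]) where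
  toFun x := fun p => (x : ℤ_[(p : ℕ)])
  map_zero' := by funext p; simp
  map_add' a b := by funext p; push_cast; rfl

lemma zhat_prime_div (q : ℕ) (hq : q.Prime) :
    ∀ c : (∀ p : Nat.Primes, ℤ_[(p : ℕ)]) ⧸ zhatDiagonal.range,
      ∃ d : (∀ p : Nat.Primes, ℤ_[(p : ℕ)]) ⧸ zhatDiagonal.range, q • d = c := by
  intro c
  obtain ⟨x, rfl⟩ := QuotientAddGroup.mk_surjective c
  haveI : Fact q.Prime := ⟨hq⟩
  set P : Nat.Primes := ⟨q, hq⟩ with hP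
  set m : ℤ := ((PadicInt.toZMod (x P)).val : ℤ) with hm
  have hdvd : ∀ p : Nat.Primes, ((q : ℤ) : ℤ_[(p : ℕ)]) ∣ (x p - (m : ℤ_[(p : ℕ)])) := by
    intro p
    by_cases hp : p = P
    · subst hp
      have h1 : PadicInt.toZMod (x P - (m : ℤ_[(P : ℕ)])) = 0 := by
        rw [map_sub, map_intCast, hm]
        push_cast
        simp [ZMod.natCast_val, ZMod.cast_id, -PadicInt.val_toZMod_eq_zmodRepr]
      have h2 : x P - (m : ℤ_[(P : ℕ)]) ∈ RingHom.ker (PadicInt.toZMod (p := (P : ℕ))) := h1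
      rw [PadicInt.ker_toZMod, PadicInt.maximalIdeal_eq_span_p,
        Ideal.mem_span_singleton] at h2
      exact_mod_cast h2
    · have hpq : ¬ ((p : ℕ) : ℤ) ∣ (q : ℤ) := by
        intro hdvd
        have : (p : ℕ) ∣ q := Int.ofNat_dvd.mp (by exact_mod_cast hdvd)
        have := (Nat.prime_dvd_prime_iff_eq p.2 hq).mp this
        exact hp (Nat.Primes.coe_nat_injective (by simp [this, hP]))
      have hnorm : ‖((q : ℤ) : ℤ_[(p : ℕ)])‖ = 1 := by
        rcases lt_or_eq_of_le (PadicInt.norm_le_one ((q : ℤ) : ℤ_[(p : ℕ)])) with h | h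
        · exact absurd ((PadicInt.norm_int_lt_one_iff_dvd _).mp h) hpq
        · exact h
      exact (PadicInt.isUnit_iff.mpr hnorm).dvd
  choose y hy using hdvd
  refine ⟨QuotientAddGroup.mk y, ?_⟩
  rw [← QuotientAddGroup.mk_nsmul, QuotientAddGroup.eq]
  refine ⟨m, ?_⟩
  funext p
  have := hy p
  show ((m : ℤ) : ℤ_[(p : ℕ)]) = -(q • y) p + x p
  simp only [Pi.smul_apply, nsmul_eq_mul]
  push_cast at this
  linear_combination -this

lemma zhat_nat_div :
    ∀ n : ℕ, 0 < n → ∀ c : (∀ p : Nat.Primes, ℤ_[(p : ℕ)]) ⧸ zhatDiagonal.range,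
      ∃ d : (∀ p : Nat.Primes, ℤ_[(p : ℕ)]) ⧸ zhatDiagonal.range, n • d = c := by
  intro n
  induction n using Nat.strong_induction_on with
  | _ n ih =>
    intro hn c
    rcases eq_or_ne n 1 with rfl | h1
    · exact ⟨c, one_smul _ c⟩
    · have hq := Nat.minFac_prime h1
      obtain ⟨k, hk⟩ := Nat.minFac_dvd n
      have hk0 : 0 < k := by
        rcases Nat.eq_zero_or_pos k with rfl | h
        · omega
        · exact h
      have hklt : k < n := by
        have h2 := hq.two_le
        nlinarith
      obtain ⟨d1, hd1⟩ := ih k hklt hk0 c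
      obtain ⟨d2, hd2⟩ := zhat_prime_div n.minFac hq d1
      exact ⟨d2, by rw [hk, mul_comm, mul_smul, hd2, hd1]⟩

/-- The quotient `Ẑ/ℤ` of the product of all rings of `p`-adic integers by the
diagonally embedded copy of `ℤ` is a divisible abelian group. -/
theorem zhat_quotient_int_divisible :
    ∀ n : ℤ, 0 < n → ∀ c : (∀ p : Nat.Primes, ℤ_[(p : ℕ)]) ⧸ zhatDiagonal.range,
      ∃ d : (∀ p : Nat.Primes, ℤ_[(p : ℕ)]) ⧸ zhatDiagonal.range, n • d = c := by
  intro n hn c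
  obtain ⟨d, hd⟩ := zhat_nat_div n.toNat (by omega) c
  refine ⟨d, ?_⟩
  rw [show n = (n.toNat : ℤ) by omega, natCast_zsmul, hd]
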